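/- Let ν : R \ {0} → ℤ^N be a valuation with 1-dimensional leaves on a ℂ-algebra R without nonzero zero-divisors, and let V ⊆ R be a finite-dimensional ℂ-linear subspace. Then there exists a ℂ-basis B of V such that the values ν(b), b ∈ B, are pairwise distinct; moreover ν(V \ {0}) = {ν(b) | b ∈ B}, so the cardinality of ν(V \ {0}) equals dim_ℂ V. -/

import Mathlib

set_option linter.unusedSectionVars false
set_option linter.unusedVariables false

section aux
variable {R : Type*} [CommRing R] [IsDomain R] [Algebra ℂ R] {N : ℕ}
    (l : LinearOrder (Fin N → ℤ)) (ν : R → Fin N → ℤ)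
    (hsmul : ∀ (c : ℂ) (σ : R), c ≠ 0 → σ ≠ 0 → ν (algebraMap ℂ R c * σ) = ν σ)
    (hsum : ∀ σ τ : R, σ ≠ 0 → τ ≠ 0 → σ + τ ≠ 0 →
      l.le (l.min (ν σ) (ν τ)) (ν (σ + τ)))

include hsmul in
lemma val_neg {τ : R} (hτ : τ ≠ 0) : ν (-τ) = ν τ := by
  have h : -τ = algebraMap ℂ R (-1) * τ := by simp
  rw [h]; exact hsmul (-1) τ (by norm_num) hτ

include hsmul in
lemma add_ne_zero_of_val_ne {σ τ : R} (hσ : σ ≠ 0) (hτ : τ ≠ 0) (h : ν σ ≠ ν τ) :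
    σ + τ ≠ 0 := by
  intro h0
  have : τ = -σ := by linear_combination h0
  rw [this, val_neg ν hsmul hσ] at h
  exact h rfl

include hsmul hsum in
lemma val_add_lt {σ τ : R} (hσ : σ ≠ 0) (hτ : τ ≠ 0) (h : l.lt (ν σ) (ν τ)) :
    ν (σ + τ) = ν σ := by
  have hne : ν σ ≠ ν τ := @ne_of_lt _ l.toPreorder _ _ h
  have hs : σ + τ ≠ 0 := add_ne_zero_of_val_ne ν hsmul hσ hτ hne
  have h1 : l.le (ν σ) (ν (σ + τ)) := by
    have := hsum σ τ hσ hτ hs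
    rwa [l.min_def, if_pos (@le_of_lt _ l.toPreorder _ _ h)] at this
  have h2 : l.le (l.min (ν (σ + τ)) (ν (-τ))) (ν σ) := by
    have := hsum (σ + τ) (-τ) hs (neg_ne_zero.mpr hτ) (by simpa using hσ)
    simpa using this
  rw [val_neg ν hsmul hτ, l.min_def] at h2
  by_cases hd : l.le (ν (σ + τ)) (ν τ)
  · rw [if_pos hd] at h2; exact l.le_antisymm _ _ h2 h1
  · rw [if_neg hd] at h2
    exact absurd h (@not_lt_of_ge _ l.toPreorder _ _ h2)

include hsmul hsum in
lemma val_add_ne {σ τ : R} (hσ : σ ≠ 0) (hτ : τ ≠ 0) (h : ν σ ≠ ν τ) :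
    ν (σ + τ) = ν σ ∨ ν (σ + τ) = ν τ := by
  rcases l.le_total (ν σ) (ν τ) with hc | hc
  · left
    exact val_add_lt l ν hsmul hsum hσ hτ (@lt_of_le_of_ne _ l.toPartialOrder _ _ hc h)
  · right
    rw [add_comm]
    exact val_add_lt l ν hsmul hsum hτ hσ (@lt_of_le_of_ne _ l.toPartialOrder _ _ hc (Ne.symm h))

include hsmul hsum in
/-- Sum of nonzero elements with pairwise distinct values is nonzero, and its value is
one of the values. -/
lemma val_sum {ι : Type*} (f : ι → R) (s : Finset ι) (hs : s.Nonempty)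
    (h0 : ∀ i ∈ s, f i ≠ 0)
    (hinj : ∀ i ∈ s, ∀ j ∈ s, ν (f i) = ν (f j) → i = j) :
    (∑ i ∈ s, f i) ≠ 0 ∧ ∃ i ∈ s, ν (∑ i ∈ s, f i) = ν (f i) := by
  classical
  induction s using Finset.induction_on with
  | empty => exact absurd hs (by simp)
  | @insert a s ha ih =>
    by_cases hse : s.Nonempty
    · obtain ⟨hne, i, hi, hvi⟩ := ih hse (fun i hi => h0 i (Finset.mem_insert_of_mem hi))
        (fun i hi j hj => hinj i (Finset.mem_insert_of_mem hi) j (Finset.mem_insert_of_mem hj))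
      have ha0 : f a ≠ 0 := h0 a (Finset.mem_insert_self a s)
      have hvne : ν (f a) ≠ ν (∑ i ∈ s, f i) := by
        rw [hvi]
        intro hh
        exact ha (hinj a (Finset.mem_insert_self a s) i (Finset.mem_insert_of_mem hi) hh ▸ hi)
      rw [Finset.sum_insert ha]
      refine ⟨add_ne_zero_of_val_ne ν hsmul ha0 hne hvne, ?_⟩
      rcases val_add_ne l ν hsmul hsum ha0 hne hvne with hv | hv
      · exact ⟨a, Finset.mem_insert_self a s, hv⟩
      · exact ⟨i, Finset.mem_insert_of_mem hi, hv.trans hvi⟩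
    · rw [Finset.not_nonempty_iff_eq_empty] at hse
      subst hse
      simp only [Finset.sum_insert ha, Finset.sum_empty, add_zero]
      exact ⟨h0 a (by simp), a, by simp⟩

end aux

section aux2
variable {R : Type*} [CommRing R] [IsDomain R] [Algebra ℂ R] {N : ℕ}
    (l : LinearOrder (Fin N → ℤ)) (ν : R → Fin N → ℤ)
    (hsmul : ∀ (c : ℂ) (σ : R), c ≠ 0 → σ ≠ 0 → ν (algebraMap ℂ R c * σ) = ν σ)
    (hsum : ∀ σ τ : R, σ ≠ 0 → τ ≠ 0 → σ + τ ≠ 0 →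
      l.le (l.min (ν σ) (ν τ)) (ν (σ + τ)))

include hsmul in
lemma val_smul {c : ℂ} {σ : R} (hc : c ≠ 0) (hσ : σ ≠ 0) : ν (c • σ) = ν σ := by
  rw [Algebra.smul_def]; exact hsmul c σ hc hσ

lemma smul_ne_zero' {c : ℂ} {σ : R} (hc : c ≠ 0) (hσ : σ ≠ 0) : c • σ ≠ 0 := by
  rw [Algebra.smul_def]
  exact mul_ne_zero (fun h => hc ((algebraMap ℂ R).injective (by simpa using h))) hσ

include hsmul hsum in
lemma indep_of_injOn (B : Finset R) (h0 : (0 : R) ∉ B) (hinj : Set.InjOn ν (B : Set R)) :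
    LinearIndependent ℂ (fun b : B => (b : R)) := by
  classical
  rw [linearIndependent_iff']
  intro s g hsum0 i hi
  by_contra hgi
  set t := s.filter (fun j => g j ≠ 0) with ht
  have hts : t ⊆ s := Finset.filter_subset _ _
  have hit : i ∈ t := Finset.mem_filter.mpr ⟨hi, hgi⟩
  have hsum0' : (∑ j ∈ t, g j • (j : R)) = 0 := by
    rw [← hsum0]
    exact Finset.sum_filter_of_ne (fun j hj h => by
      intro hg; exact h (by rw [hg, zero_smul]))
  have hne0 : ∀ j : B, j ∈ t → g j • (j : R) ≠ 0 := fun j hj =>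
    smul_ne_zero' (Finset.mem_filter.mp hj).2
      (fun h => h0 (h ▸ j.2))
  have : (∑ j ∈ t, g j • (j : R)) ≠ 0 := by
    refine (val_sum l ν hsmul hsum _ t ⟨i, hit⟩ hne0 ?_).1
    intro a ha b hb hab
    have ha' : (a : R) ≠ 0 := fun h => h0 (h ▸ a.2)
    have hb' : (b : R) ≠ 0 := fun h => h0 (h ▸ b.2)
    rw [val_smul ν hsmul (Finset.mem_filter.mp ha).2 ha',
      val_smul ν hsmul (Finset.mem_filter.mp hb).2 hb'] at hab
    exact Subtype.ext (hinj a.2 b.2 hab)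
  exact this hsum0'

end aux2

section aux3
open Module
variable {R : Type*} [CommRing R] [IsDomain R] [Algebra ℂ R] {N : ℕ}
    (l : LinearOrder (Fin N → ℤ)) (ν : R → Fin N → ℤ)
    (hsmul : ∀ (c : ℂ) (σ : R), c ≠ 0 → σ ≠ 0 → ν (algebraMap ℂ R c * σ) = ν σ)
    (hsum : ∀ σ τ : R, σ ≠ 0 → τ ≠ 0 → σ + τ ≠ 0 →
      l.le (l.min (ν σ) (ν τ)) (ν (σ + τ)))
    (V : Submodule ℂ R) [FiniteDimensional ℂ V]

include hsmul hsum in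
lemma card_le_finrank (B : Finset R) (hBV : (B : Set R) ⊆ (V : Set R)) (h0 : (0:R) ∉ B)
    (hinj : Set.InjOn ν (B : Set R)) : B.card ≤ finrank ℂ V := by
  have hli := indep_of_injOn l ν hsmul hsum B h0 hinj
  calc B.card = finrank ℂ (Submodule.span ℂ (B : Set R)) :=
        (finrank_span_finset_eq_card hli).symm
    _ ≤ finrank ℂ V := Submodule.finrank_mono (Submodule.span_le.mpr hBV)

include hsmul hsum in
lemma values_finite : (ν '' ((V : Set R) \ {0})).Finite := by
  classical
  by_contra h
  obtain ⟨A, hA, hcard⟩ := (Set.Infinite.exists_subset_card_eq h (finrank ℂ V + 1))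
  have hch : ∀ a ∈ A, ∃ v : R, (v ∈ (V : Set R) ∧ v ≠ 0) ∧ ν v = a := by
    intro a ha
    obtain ⟨v, hv, hva⟩ := hA ha
    exact ⟨v, ⟨hv.1, hv.2⟩, hva⟩
  choose w hw1 hw2 using hch
  set B : Finset R := A.attach.image (fun a => w a.1 a.2) with hB
  have hwinj : ∀ a (ha : a ∈ A) b (hb : b ∈ A), w a ha = w b hb → a = b := by
    intro a ha b hb hab
    rw [← hw2 a ha, ← hw2 b hb, hab]
  have hcardB : B.card = A.card := by
    rw [hB, Finset.card_image_of_injective _ ?_, Finset.card_attach]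
    · intro a b hab
      exact Subtype.ext (hwinj _ a.2 _ b.2 hab)
  have hBV : (B : Set R) ⊆ (V : Set R) := by
    intro x hx
    simp only [hB, Finset.coe_image, Set.mem_image] at hx
    obtain ⟨a, ha, rfl⟩ := hx
    exact (hw1 a.1 a.2).1
  have h0 : (0:R) ∉ B := by
    simp only [hB, Finset.mem_image]
    rintro ⟨a, ha, hb⟩
    exact (hw1 a.1 a.2).2 hb
  have hinj : Set.InjOn ν (B : Set R) := by
    intro x hx y hy hxy
    simp only [hB, Finset.coe_image, Set.mem_image] at hx hy
    obtain ⟨a, ha, rfl⟩ := hx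
    obtain ⟨b, hb, rfl⟩ := hy
    rw [hw2 a.1 a.2, hw2 b.1 b.2] at hxy
    obtain rfl : a = b := Subtype.ext hxy
    rfl
  have := card_le_finrank l ν hsmul hsum V B hBV h0 hinj
  omega

include hsmul hsum in
lemma extend_basis
    (hleaf : ∀ σ τ : R, σ ≠ 0 → τ ≠ 0 → ν σ = ν τ →
      ∃ c : ℂ, c ≠ 0 ∧ (σ - algebraMap ℂ R c * τ = 0 ∨
        l.lt (ν τ) (ν (σ - algebraMap ℂ R c * τ))))
    (B : Finset R) (hBV : (B : Set R) ⊆ (V : Set R)) (h0 : (0:R) ∉ B)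
    (hinj : Set.InjOn ν (B : Set R)) (hne : Submodule.span ℂ (B : Set R) ≠ V) :
    ∃ w : R, w ∈ V ∧ w ∉ Submodule.span ℂ (B : Set R) ∧ ∀ b ∈ B, ν w ≠ ν b := by
  classical
  have hle : Submodule.span ℂ (B : Set R) ≤ V := Submodule.span_le.mpr hBV
  obtain ⟨w0, hw0V, hw0s⟩ := SetLike.exists_of_lt (lt_of_le_of_ne hle hne)
  have hfin := values_finite l ν hsmul hsum V
  set S : R → Finset (Fin N → ℤ) :=
    fun w => hfin.toFinset.filter (fun a => l.lt (ν w) a) with hS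
  suffices h : ∀ n : ℕ, ∀ w : R, w ∈ V → w ∉ Submodule.span ℂ (B : Set R) →
      (S w).card ≤ n →
      ∃ w' : R, w' ∈ V ∧ w' ∉ Submodule.span ℂ (B : Set R) ∧ ∀ b ∈ B, ν w' ≠ ν b by
    exact h (S w0).card w0 hw0V hw0s le_rfl
  intro n
  induction n with
  | zero =>
    intro w hwV hws hcard
    by_cases hall : ∀ b ∈ B, ν w ≠ ν b
    · exact ⟨w, hwV, hws, hall⟩
    · exfalso
      push_neg at hall
      obtain ⟨b, hb, hνb⟩ := hall
      have hw0 : w ≠ 0 := fun h => hws (h ▸ Submodule.zero_mem _)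
      have hb0 : b ≠ 0 := fun h => h0 (h ▸ hb)
      obtain ⟨c, hc, hcase⟩ := hleaf w b hw0 hb0 hνb
      have hmem : algebraMap ℂ R c * b ∈ Submodule.span ℂ (B : Set R) := by
        rw [← Algebra.smul_def]
        exact Submodule.smul_mem _ _ (Submodule.subset_span hb)
      rcases hcase with hz | hlt
      · apply hws
        have : w = algebraMap ℂ R c * b := by linear_combination hz
        rw [this]; exact hmem
      · set w' := w - algebraMap ℂ R c * b with hw'
        have hw's : w' ∉ Submodule.span ℂ (B : Set R) := by
          intro h
          apply hws
          have : w = w' + algebraMap ℂ R c * b := by ring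
          rw [this]; exact Submodule.add_mem _ h hmem
        have hw'0 : w' ≠ 0 := fun h => hw's (h ▸ Submodule.zero_mem _)
        have hw'V : w' ∈ V := Submodule.sub_mem _ hwV
          (by rw [← Algebra.smul_def]; exact Submodule.smul_mem _ _ (hBV hb))
        have hmemS : ν w' ∈ S w := by
          rw [hS]
          refine Finset.mem_filter.mpr ⟨hfin.mem_toFinset.mpr ⟨w', ⟨hw'V, hw'0⟩, rfl⟩, ?_⟩
          rw [hνb]; exact hlt
        have : 0 < (S w).card := Finset.card_pos.mpr ⟨_, hmemS⟩
        omega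
  | succ n ih =>
    intro w hwV hws hcard
    by_cases hall : ∀ b ∈ B, ν w ≠ ν b
    · exact ⟨w, hwV, hws, hall⟩
    · push_neg at hall
      obtain ⟨b, hb, hνb⟩ := hall
      have hw0 : w ≠ 0 := fun h => hws (h ▸ Submodule.zero_mem _)
      have hb0 : b ≠ 0 := fun h => h0 (h ▸ hb)
      obtain ⟨c, hc, hcase⟩ := hleaf w b hw0 hb0 hνb
      have hmem : algebraMap ℂ R c * b ∈ Submodule.span ℂ (B : Set R) := by
        rw [← Algebra.smul_def]
        exact Submodule.smul_mem _ _ (Submodule.subset_span hb)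
      rcases hcase with hz | hlt
      · exfalso
        apply hws
        have : w = algebraMap ℂ R c * b := by linear_combination hz
        rw [this]; exact hmem
      · set w' := w - algebraMap ℂ R c * b with hw'
        have hw's : w' ∉ Submodule.span ℂ (B : Set R) := by
          intro h
          apply hws
          have : w = w' + algebraMap ℂ R c * b := by ring
          rw [this]; exact Submodule.add_mem _ h hmem
        have hw'0 : w' ≠ 0 := fun h => hw's (h ▸ Submodule.zero_mem _)
        have hw'V : w' ∈ V := Submodule.sub_mem _ hwV
          (by rw [← Algebra.smul_def]; exact Submodule.smul_mem _ _ (hBV hb))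
        have hltw : l.lt (ν w) (ν w') := hνb ▸ hlt
        have hmemS : ν w' ∈ S w := by
          rw [hS]
          exact Finset.mem_filter.mpr ⟨hfin.mem_toFinset.mpr ⟨w', ⟨hw'V, hw'0⟩, rfl⟩, hltw⟩
        have hsub : S w' ⊆ S w \ {ν w'} := by
          intro a ha
          rw [hS] at ha
          obtain ⟨ha1, ha2⟩ := Finset.mem_filter.mp ha
          refine Finset.mem_sdiff.mpr ⟨Finset.mem_filter.mpr
            ⟨ha1, @lt_trans _ l.toPreorder _ _ _ hltw ha2⟩, ?_⟩
          simp only [Finset.mem_singleton]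
          intro h
          exact absurd (h ▸ ha2) (@lt_irrefl _ l.toPreorder _)
        have hcard' : (S w').card < (S w).card := by
          calc (S w').card ≤ (S w \ {ν w'}).card := Finset.card_le_card hsub
            _ < (S w).card := by
              rw [Finset.card_sdiff_of_subset (Finset.singleton_subset_iff.mpr hmemS)]
              have : 0 < (S w).card := Finset.card_pos.mpr ⟨_, hmemS⟩
              simp only [Finset.card_singleton]
              omega
        exact ih w' hw'V hw's (by omega)

end aux3


/-- A valuation with 1-dimensional leaves on a `ℂ`-algebra without nonzero zero-divisors:
every finite-dimensional subspace `V` admits a basis `B` on which `ν` is injective, and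
`ν(V \ {0})` is exactly the set of values on `B`; in particular its cardinality is `dim V`. -/
theorem stmt1 {R : Type*} [CommRing R] [IsDomain R] [Algebra ℂ R] {N : ℕ}
    (l : LinearOrder (Fin N → ℤ))
    (hcompat : ∀ a b c : Fin N → ℤ, l.le a b → l.le (a + c) (b + c))
    (ν : R → Fin N → ℤ)
    (hmul : ∀ σ τ : R, σ ≠ 0 → τ ≠ 0 → ν (σ * τ) = ν σ + ν τ)
    (hsmul : ∀ (c : ℂ) (σ : R), c ≠ 0 → σ ≠ 0 → ν (algebraMap ℂ R c * σ) = ν σ)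
    (hsum : ∀ σ τ : R, σ ≠ 0 → τ ≠ 0 → σ + τ ≠ 0 →
      l.le (l.min (ν σ) (ν τ)) (ν (σ + τ)))
    -- `ν` has 1-dimensional leaves: two nonzero elements with the same value agree up to a
    -- nonzero scalar modulo elements of strictly larger value.
    (hleaf : ∀ σ τ : R, σ ≠ 0 → τ ≠ 0 → ν σ = ν τ →
      ∃ c : ℂ, c ≠ 0 ∧ (σ - algebraMap ℂ R c * τ = 0 ∨
        l.lt (ν τ) (ν (σ - algebraMap ℂ R c * τ))))
    (V : Submodule ℂ R) [FiniteDimensional ℂ V] :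
    ∃ B : Finset R, (B : Set R) ⊆ (V : Set R) ∧ (0 : R) ∉ B ∧
      LinearIndependent ℂ (fun b : B => (b : R)) ∧
      Submodule.span ℂ (B : Set R) = V ∧
      Set.InjOn ν (B : Set R) ∧
      ν '' ((V : Set R) \ {0}) = ν '' (B : Set R) ∧
      B.card = Module.finrank ℂ V := by
  classical
  -- Step 1: build a spanning set with pairwise distinct values
  have main : ∀ n : ℕ, ∀ B : Finset R, (B : Set R) ⊆ (V : Set R) → (0:R) ∉ B →
      Set.InjOn ν (B : Set R) → Module.finrank ℂ V - B.card ≤ n →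
      ∃ B' : Finset R, (B' : Set R) ⊆ (V : Set R) ∧ (0:R) ∉ B' ∧
        Set.InjOn ν (B' : Set R) ∧ Submodule.span ℂ (B' : Set R) = V := by
    intro n
    induction n with
    | zero =>
      intro B hBV h0 hinj hc
      have hcle := card_le_finrank l ν hsmul hsum V B hBV h0 hinj
      have hcard : B.card = Module.finrank ℂ V := by omega
      refine ⟨B, hBV, h0, hinj, ?_⟩
      refine Submodule.eq_of_le_of_finrank_le (Submodule.span_le.mpr hBV) ?_
      rw [finrank_span_finset_eq_card (indep_of_injOn l ν hsmul hsum B h0 hinj), hcard]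
    | succ n ih =>
      intro B hBV h0 hinj hc
      by_cases hspan : Submodule.span ℂ (B : Set R) = V
      · exact ⟨B, hBV, h0, hinj, hspan⟩
      · obtain ⟨w, hwV, hws, hwval⟩ :=
          extend_basis l ν hsmul hsum V hleaf B hBV h0 hinj hspan
        have hwB : w ∉ B := fun h => hws (Submodule.subset_span h)
        have hw0 : w ≠ 0 := fun h => hws (h ▸ Submodule.zero_mem _)
        have hBV' : ((insert w B : Finset R) : Set R) ⊆ (V : Set R) := by
          rw [Finset.coe_insert]
          exact Set.insert_subset hwV hBV
        have h0' : (0:R) ∉ insert w B := by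
          simp only [Finset.mem_insert, not_or]
          exact ⟨fun h => hw0 h.symm, h0⟩
        have hinj' : Set.InjOn ν ((insert w B : Finset R) : Set R) := by
          rw [Finset.coe_insert]
          intro x hx y hy hxy
          rcases hx with rfl | hx
          · rcases hy with rfl | hy
            · rfl
            · exact absurd hxy (hwval y hy)
          · rcases hy with rfl | hy
            · exact absurd hxy.symm (hwval x hx)
            · exact hinj hx hy hxy
        have hcard' : (insert w B).card = B.card + 1 := Finset.card_insert_of_notMem hwB
        have hcle := card_le_finrank l ν hsmul hsum V _ hBV' h0' hinj'
        exact ih (insert w B) hBV' h0' hinj' (by omega)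
  obtain ⟨B, hBV, h0, hinj, hspan⟩ :=
    main (Module.finrank ℂ V) ∅ (by simp) (by simp) (by simp) (by simp)
  have hli := indep_of_injOn l ν hsmul hsum B h0 hinj
  refine ⟨B, hBV, h0, hli, hspan, hinj, ?_, ?_⟩
  · apply Set.Subset.antisymm
    · rintro x ⟨v, ⟨hvV, hv0⟩, rfl⟩
      have hv0' : v ≠ 0 := hv0
      have hvs : v ∈ Submodule.span ℂ (B : Set R) := hspan ▸ hvV
      obtain ⟨f, -, hf⟩ := Submodule.mem_span_finset.mp hvs
      set t := B.filter (fun b => f b ≠ 0) with ht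
      have hsum' : (∑ b ∈ t, f b • b) = v := by
        rw [← hf]
        exact Finset.sum_filter_of_ne (fun b hb h hg => h (by rw [hg, zero_smul]))
      have htne : t.Nonempty := by
        rcases Finset.eq_empty_or_nonempty t with h | h
        · exfalso; apply hv0'; rw [← hsum', h, Finset.sum_empty]
        · exact h
      have h0t : ∀ b ∈ t, f b • b ≠ 0 := fun b hb =>
        smul_ne_zero' (Finset.mem_filter.mp hb).2
          (fun h => h0 (h ▸ Finset.filter_subset _ _ hb))
      have hinjt : ∀ i ∈ t, ∀ j ∈ t, ν (f i • i) = ν (f j • j) → i = j := by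
        intro i hi j hj hij
        have hi' : i ≠ 0 := fun h => h0 (h ▸ Finset.filter_subset _ _ hi)
        have hj' : j ≠ 0 := fun h => h0 (h ▸ Finset.filter_subset _ _ hj)
        rw [val_smul ν hsmul (Finset.mem_filter.mp hi).2 hi',
          val_smul ν hsmul (Finset.mem_filter.mp hj).2 hj'] at hij
        exact hinj (Finset.filter_subset _ _ hi) (Finset.filter_subset _ _ hj) hij
      obtain ⟨_, i, hi, hvi⟩ := val_sum l ν hsmul hsum _ t htne h0t hinjt
      have hi' : i ≠ 0 := fun h => h0 (h ▸ Finset.filter_subset _ _ hi)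
      rw [hsum'] at hvi
      rw [hvi, val_smul ν hsmul (Finset.mem_filter.mp hi).2 hi']
      exact Set.mem_image_of_mem ν (Finset.filter_subset _ _ hi)
    · apply Set.image_mono
      intro b hb
      exact ⟨hBV hb, fun h => h0 (h ▸ hb)⟩
  · rw [← hspan]
    exact (finrank_span_finset_eq_card hli).symm
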